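/- Let u : X → ℝ be a non-negative measurable function on an ergodic system (X, 𝒳, μ, T) such that √u is integrable. Then (1/n²) ∑_{i=0}^{n-1} u∘T^i converges to 0 μ-almost everywhere. -/

import Mathlib

set_option linter.unusedSectionVars false
open MeasureTheory Filter Topology

section Aux

variable {X : Type*} [MeasurableSpace X] {μ : Measure X}

/-- Birkhoff sum. -/
noncomputable def birkS (f : X → X) (g : X → ℝ) (n : ℕ) (x : X) : ℝ :=
  ∑ i ∈ Finset.range n, g (f^[i] x)

/-- Running maximum of Birkhoff sums (including the `0`-th, which is `0`). -/
noncomputable def maxS (f : X → X) (g : X → ℝ) : ℕ → X → ℝ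
  | 0 => fun _ => 0
  | (N + 1) => fun x => max (maxS f g N x) (birkS f g (N + 1) x)

variable {f : X → X} {g : X → ℝ}

lemma birkS_zero (x : X) : birkS f g 0 x = 0 := by simp [birkS]

lemma birkS_succ (n : ℕ) (x : X) : birkS f g (n + 1) x = g x + birkS f g n (f x) := by
  unfold birkS
  rw [Finset.sum_range_succ']
  simp [Function.iterate_succ_apply, add_comm]

lemma maxS_nonneg (N : ℕ) (x : X) : 0 ≤ maxS f g N x := by
  induction N with
  | zero => simp [maxS]
  | succ N ih => exact le_trans ih (le_max_left _ _)

lemma maxS_le_succ (N : ℕ) (x : X) : maxS f g N x ≤ maxS f g (N + 1) x := le_max_left _ _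

lemma birkS_le_maxS {n N : ℕ} (h : n ≤ N) (x : X) : birkS f g n x ≤ maxS f g N x := by
  induction N with
  | zero =>
    interval_cases n
    simp [birkS, maxS]
  | succ N ih =>
    rcases Nat.lt_or_ge n (N + 1) with h' | h'
    · exact le_trans (ih (Nat.lt_succ_iff.mp h')) (maxS_le_succ N x)
    · have : n = N + 1 := le_antisymm h h'
      subst this
      exact le_max_right _ _

lemma maxS_le_key (N : ℕ) (x : X) :
    maxS f g N x ≤ max 0 (g x + maxS f g N (f x)) := by
  induction N with
  | zero => simp [maxS]
  | succ N ih =>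
    show max (maxS f g N x) (birkS f g (N + 1) x) ≤ _
    apply max_le
    · exact le_trans ih (max_le_max le_rfl (by gcongr; exact maxS_le_succ N (f x)))
    · rw [birkS_succ]
      refine le_trans ?_ (le_max_right _ _)
      gcongr
      exact birkS_le_maxS (Nat.le_succ N) (f x)

lemma measurable_birkS (hf : Measurable f) (hg : Measurable g) (n : ℕ) :
    Measurable (birkS f g n) := by
  apply Finset.measurable_sum
  intro i _
  exact hg.comp (hf.iterate i)

lemma measurable_maxS (hf : Measurable f) (hg : Measurable g) (N : ℕ) :
    Measurable (maxS f g N) := by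
  induction N with
  | zero => exact measurable_const
  | succ N ih => exact ih.max (measurable_birkS hf hg (N + 1))

lemma integrable_comp_iterate (hf : MeasurePreserving f μ μ) {h : X → ℝ}
    (hi : Integrable h μ) (n : ℕ) : Integrable (fun x => h (f^[n] x)) μ :=
  ((hf.iterate n).integrable_comp hi.aestronglyMeasurable).mpr hi

lemma integrable_birkS (hf : MeasurePreserving f μ μ) (hgi : Integrable g μ) (n : ℕ) :
    Integrable (birkS f g n) μ := by
  apply integrable_finset_sum
  intro i _
  exact integrable_comp_iterate hf hgi i

lemma integrable_maxS (hf : MeasurePreserving f μ μ) (hgi : Integrable g μ) (N : ℕ) :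
    Integrable (maxS f g N) μ := by
  induction N with
  | zero => exact integrable_zero X ℝ μ
  | succ N ih => exact ih.sup (integrable_birkS hf hgi (N + 1))

lemma integral_comp_mp (hf : MeasurePreserving f μ μ) {h : X → ℝ}
    (hm : AEStronglyMeasurable h μ) : ∫ x, h (f x) ∂μ = ∫ x, h x ∂μ := by
  nth_rewrite 2 [← hf.map_eq]
  rw [← hf.map_eq] at hm
  exact (integral_map hf.measurable.aemeasurable hm).symm

end Aux
section Aux2

variable {X : Type*} [MeasurableSpace X] {μ : Measure X} {f : X → X} {g : X → ℝ}

/-- Hopf's maximal ergodic lemma (Garsia's proof). -/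
lemma garsia (hf : MeasurePreserving f μ μ) (hg : Measurable g) (hgi : Integrable g μ)
    (N : ℕ) : 0 ≤ ∫ x in {x | 0 < maxS f g N x}, g x ∂μ := by
  set E := {x | 0 < maxS f g N x} with hEdef
  have hE : MeasurableSet E := measurableSet_lt measurable_const (measurable_maxS hf.measurable hg N)
  set M := maxS f g N with hMdef
  have hMi : Integrable M μ := integrable_maxS hf hgi N
  have hMTi : Integrable (fun x => M (f x)) μ := by
    have := integrable_comp_iterate hf hMi 1
    simpa using this
  have key : ∀ x, M x - E.indicator (fun x => M (f x)) x ≤ E.indicator g x := by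
    intro x
    by_cases hx : x ∈ E
    · simp only [Set.indicator_of_mem hx]
      have h1 := maxS_le_key (f := f) (g := g) N x
      rcases le_max_iff.mp h1 with h2 | h2
      · exact absurd hx (by simpa [hEdef, not_lt] using h2)
      · linarith
    · simp only [Set.indicator_of_notMem hx]
      have h1 : M x ≤ 0 := le_of_not_gt (by simpa [hEdef] using hx)
      linarith
  have hIndMT : Integrable (E.indicator (fun x => M (f x))) μ := hMTi.indicator hE
  have hIndg : Integrable (E.indicator g) μ := hgi.indicator hE
  have step1 : ∫ x in E, M (f x) ∂μ ≤ ∫ x, M (f x) ∂μ := by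
    apply setIntegral_le_integral hMTi
    filter_upwards with x
    exact maxS_nonneg N (f x)
  have step2 : ∫ x, M (f x) ∂μ = ∫ x, M x ∂μ := integral_comp_mp hf hMi.aestronglyMeasurable
  have step3 : ∫ x, (M x - E.indicator (fun x => M (f x)) x) ∂μ ≤ ∫ x, E.indicator g x ∂μ :=
    integral_mono (hMi.sub hIndMT) hIndg key
  rw [integral_sub hMi hIndMT, integral_indicator hE, integral_indicator hE] at step3
  linarith

lemma birkS_sub_const (c : ℝ) (n : ℕ) (x : X) :
    birkS f (fun y => g y - c) n x = birkS f g n x - c * n := by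
  unfold birkS
  rw [Finset.sum_sub_distrib, Finset.sum_const, Finset.card_range]
  ring_nf

/-- The maximal inequality consequence: a.e. linear bound for Birkhoff sums. -/
lemma ae_linear_bound [IsFiniteMeasure μ] (hf : MeasurePreserving f μ μ)
    (hg : Measurable g) (hgi : Integrable g μ) :
    ∀ᵐ x ∂μ, ∃ C : ℝ, ∀ n : ℕ, birkS f g n x ≤ C * n := by
  set I := ∫ x, |g x| ∂μ with hIdef
  have hI0 : 0 ≤ I := integral_nonneg fun x => abs_nonneg _
  set gk : ℕ → X → ℝ := fun k y => g y - ((k : ℝ) + 1) with hgkdef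
  have hgkm : ∀ k, Measurable (gk k) := fun k => hg.sub measurable_const
  have hgki : ∀ k, Integrable (gk k) μ := fun k => hgi.sub (integrable_const _)
  set E : ℕ → ℕ → Set X := fun k N => {x | 0 < maxS f (gk k) N x} with hEdef
  have hEmeas : ∀ k N, MeasurableSet (E k N) := fun k N =>
    measurableSet_lt measurable_const (measurable_maxS hf.measurable (hgkm k) N)
  have hEmono : ∀ k, Monotone (E k) := by
    intro k
    apply monotone_nat_of_le_succ
    intro N x hx
    exact lt_of_lt_of_le hx (maxS_le_succ N x)
  -- measure bound for each E k N
  have hmeasE : ∀ k N, μ (E k N) ≤ ENNReal.ofReal (I / ((k : ℝ) + 1)) := by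
    intro k N
    have hk0 : (0 : ℝ) < (k : ℝ) + 1 := by positivity
    have h1 := garsia (g := gk k) hf (hgkm k) (hgki k) N
    have h2 : ∫ x in E k N, gk k x ∂μ
        = ∫ x in E k N, g x ∂μ - ((k : ℝ) + 1) * (μ (E k N)).toReal := by
      rw [integral_sub (hgi.integrableOn) (integrableOn_const (measure_ne_top μ _))]
      rw [setIntegral_const]
      simp [mul_comm, Measure.real]
    have h3 : ∫ x in E k N, g x ∂μ ≤ I := by
      calc ∫ x in E k N, g x ∂μ ≤ ∫ x in E k N, |g x| ∂μ :=
            integral_mono hgi.integrableOn hgi.abs.integrableOn fun x => le_abs_self _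
        _ ≤ I := setIntegral_le_integral hgi.abs (by filter_upwards with x; exact abs_nonneg _)
    have h4 : (μ (E k N)).toReal ≤ I / ((k : ℝ) + 1) := by
      rw [le_div_iff₀ hk0]
      nlinarith
    rw [ENNReal.le_ofReal_iff_toReal_le (measure_ne_top μ _) (by positivity)]
    exact h4
  set A : ℕ → Set X := fun k => ⋃ N, E k N with hAdef
  have hmeasA : ∀ k, μ (A k) ≤ ENNReal.ofReal (I / ((k : ℝ) + 1)) := by
    intro k
    rw [(hEmono k).directed_le.measure_iUnion]
    exact iSup_le fun N => hmeasE k N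
  set B := ⋂ k, A k with hBdef
  have hB : μ B = 0 := by
    have hBr : ∀ k : ℕ, (μ B).toReal ≤ I / ((k : ℝ) + 1) := by
      intro k
      have h1 : μ B ≤ ENNReal.ofReal (I / ((k : ℝ) + 1)) :=
        le_trans (measure_mono (Set.iInter_subset _ k)) (hmeasA k)
      calc (μ B).toReal ≤ (ENNReal.ofReal (I / ((k : ℝ) + 1))).toReal :=
            ENNReal.toReal_mono ENNReal.ofReal_ne_top h1
        _ = I / ((k : ℝ) + 1) := ENNReal.toReal_ofReal (by positivity)
    have htend : Tendsto (fun k : ℕ => I / ((k : ℝ) + 1)) atTop (𝓝 0) := by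
      have h := tendsto_const_div_atTop_nhds_zero_nat I
      have h2 := h.comp (tendsto_add_atTop_nat 1)
      apply h2.congr
      intro k
      simp only [Function.comp]
      push_cast
      ring
    have h0 : (μ B).toReal ≤ 0 := ge_of_tendsto' htend hBr
    have h1 : (μ B).toReal = 0 := le_antisymm h0 ENNReal.toReal_nonneg
    rcases (ENNReal.toReal_eq_zero_iff _).mp h1 with h | h
    · exact h
    · exact absurd h (measure_ne_top μ _)
  have hae : ∀ᵐ x ∂μ, x ∉ B := by
    rw [ae_iff]
    simpa [not_not] using hB
  filter_upwards [hae] with x hx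
  rw [hBdef, Set.mem_iInter] at hx
  push_neg at hx
  obtain ⟨k, hk⟩ := hx
  refine ⟨(k : ℝ) + 1, fun n => ?_⟩
  have h1 : x ∉ E k n := fun h => hk (Set.mem_iUnion.mpr ⟨n, h⟩)
  have h2 : maxS f (gk k) n x ≤ 0 := le_of_not_gt (by simpa [hEdef] using h1)
  have h3 : birkS f (gk k) n x ≤ 0 := le_trans (birkS_le_maxS le_rfl x) h2
  rw [birkS_sub_const] at h3
  linarith

end Aux2
section Aux3
open scoped ENNReal

variable {X : Type*} [MeasurableSpace X] {μ : Measure X} {f : X → X}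

lemma tsum_indicator_le (W : ℝ) (hW : 0 ≤ W) :
    ∑' n : ℕ, ({y : ℝ | (n : ℝ) + 1 ≤ y}.indicator 1 W : ℝ≥0∞) ≤ ENNReal.ofReal W := by
  have hind : ∀ n : ℕ, ({y : ℝ | (n : ℝ) + 1 ≤ y}.indicator 1 W : ENNReal)
      = (↑(Finset.range ⌊W⌋₊) : Set ℕ).indicator 1 n := by
    intro n
    have hiff : ((n : ℝ) + 1 ≤ W) ↔ (n < ⌊W⌋₊) := by
      rw [Nat.lt_iff_add_one_le, Nat.le_floor_iff hW]
      push_cast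
      rfl
    simp only [Set.indicator_apply, Finset.coe_range, Set.mem_Iio, Set.mem_setOf_eq,
      Pi.one_apply, hiff]
  calc ∑' n : ℕ, ({y : ℝ | (n : ℝ) + 1 ≤ y}.indicator 1 W : ℝ≥0∞)
      = ∑' n : ℕ, ((↑(Finset.range ⌊W⌋₊) : Set ℕ).indicator 1 n : ℝ≥0∞) := by
        exact tsum_congr hind
    _ = ∑ n ∈ Finset.range ⌊W⌋₊, ((↑(Finset.range ⌊W⌋₊) : Set ℕ).indicator 1 n : ℝ≥0∞) := by
        apply tsum_eq_sum
        intro n hn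
        exact Set.indicator_of_notMem (by simpa using hn) _
    _ = ∑ n ∈ Finset.range ⌊W⌋₊, (1 : ℝ≥0∞) := by
        apply Finset.sum_congr rfl
        intro n hn
        exact Set.indicator_of_mem (by simpa using hn) _
    _ = (⌊W⌋₊ : ℝ≥0∞) := by simp
    _ ≤ ENNReal.ofReal W := by
        rw [← ENNReal.ofReal_natCast]
        exact ENNReal.ofReal_le_ofReal (Nat.floor_le hW)

/-- Borel–Cantelli: for integrable nonnegative `w`, `w (f^[n] x)` grows sublinearly a.e. -/
lemma ae_sublinear [IsFiniteMeasure μ] (hf : MeasurePreserving f μ μ)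
    {w : X → ℝ} (hw : Measurable w) (hwi : Integrable w μ) (hw0 : ∀ x, 0 ≤ w x) :
    ∀ᵐ x ∂μ, ∀ k : ℕ, ∀ᶠ n in atTop, w (f^[n] x) < ((n : ℝ) + 1) / ((k : ℝ) + 1) := by
  rw [ae_all_iff]
  intro k
  have hk0 : (0 : ℝ) < (k : ℝ) + 1 := by positivity
  set s : ℕ → Set X := fun n => f^[n] ⁻¹' {y | ((n : ℝ) + 1) / ((k : ℝ) + 1) ≤ w y} with hsdef
  have hsm : ∀ n, MeasurableSet (s n) := by
    intro n
    exact (hf.measurable.iterate n) (measurableSet_le measurable_const hw)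
  have hsum : ∑' n, μ (s n) ≠ ⊤ := by
    set t : ℕ → Set X := fun n => {y | (n : ℝ) + 1 ≤ ((k : ℝ) + 1) * w y} with htdef
    have htm : ∀ n, MeasurableSet (t n) := fun n =>
      measurableSet_le measurable_const (measurable_const.mul hw)
    have hst : ∀ n, μ (s n) = μ (t n) := by
      intro n
      have h1 : {y | ((n : ℝ) + 1) / ((k : ℝ) + 1) ≤ w y} = t n := by
        ext y
        simp only [Set.mem_setOf_eq, htdef]
        rw [div_le_iff₀ hk0]
        constructor <;> intro h <;> nlinarith
      rw [hsdef]
      simp only []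
      rw [h1, (hf.iterate n).measure_preimage (htm n).nullMeasurableSet]
    rw [tsum_congr hst]
    have key : ∑' n, μ (t n) ≤ ∫⁻ y, ENNReal.ofReal (((k : ℝ) + 1) * w y) ∂μ := by
      have h2 : ∑' n, μ (t n) = ∫⁻ y, ∑' n, (t n).indicator 1 y ∂μ := by
        rw [lintegral_tsum (fun n => ((measurable_one.indicator (htm n)).aemeasurable))]
        congr 1; ext n
        rw [← lintegral_indicator_one (htm n)]
      rw [h2]
      apply lintegral_mono
      intro y
      have h3 : ∀ n : ℕ, ((t n).indicator 1 y : ℝ≥0∞)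
          = ({z : ℝ | (n : ℝ) + 1 ≤ z}.indicator 1 (((k : ℝ) + 1) * w y) : ℝ≥0∞) := by
        intro n
        simp only [htdef, Set.indicator_apply, Set.mem_setOf_eq, Pi.one_apply]
      show ∑' n : ℕ, ((t n).indicator 1 y : ENNReal) ≤ ENNReal.ofReal (((k : ℝ) + 1) * w y)
      rw [tsum_congr h3]
      exact tsum_indicator_le _ (mul_nonneg (by positivity) (hw0 y))
    have hfin : Integrable (fun y => ((k : ℝ) + 1) * w y) μ := hwi.const_mul _
    exact ne_top_of_le_ne_top hfin.lintegral_lt_top.ne key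
  have := ae_eventually_notMem hsum
  filter_upwards [this] with x hx
  filter_upwards [hx] with n hn
  rw [hsdef] at hn
  simp only [Set.mem_preimage, Set.mem_setOf_eq, not_le] at hn
  exact hn

end Aux3
section Det

/-- Deterministic lemma: if `a` is nonnegative, its partial sums grow at most linearly,
and `a n` grows sublinearly, then `(1/n²) ∑_{i<n} (a i)²` tends to `0`. -/
lemma det_lemma {a : ℕ → ℝ} (ha0 : ∀ i, 0 ≤ a i) {C : ℝ}
    (hC : ∀ n : ℕ, ∑ i ∈ Finset.range n, a i ≤ C * n)
    (hsub : ∀ k : ℕ, ∀ᶠ n in Filter.atTop, a n < ((n : ℝ) + 1) / ((k : ℝ) + 1)) :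
    Filter.Tendsto (fun n : ℕ => ((n : ℝ) ^ 2)⁻¹ * ∑ i ∈ Finset.range n, (a i) ^ 2)
      Filter.atTop (𝓝 0) := by
  set C' : ℝ := max C 1 with hC'def
  have hC'1 : (1 : ℝ) ≤ C' := le_max_right _ _
  have hC'0 : (0 : ℝ) < C' := lt_of_lt_of_le one_pos hC'1
  have hC' : ∀ n : ℕ, ∑ i ∈ Finset.range n, a i ≤ C' * n := fun n =>
    le_trans (hC n) (mul_le_mul_of_nonneg_right (le_max_left _ _) (Nat.cast_nonneg n))
  rw [NormedAddCommGroup.tendsto_nhds_zero]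
  intro ε hε
  set δ : ℝ := ε / (2 * C') with hδdef
  have hδ0 : 0 < δ := by positivity
  obtain ⟨k, hk⟩ := exists_nat_ge (2 / δ)
  have hk1 : 2 / ((k : ℝ) + 1) ≤ δ := by
    rw [div_le_iff₀ (by positivity)]
    rw [div_le_iff₀ hδ0] at hk
    nlinarith
  obtain ⟨N₁, hN₁⟩ := (Filter.eventually_atTop).mp (hsub k)
  set N : ℕ := max N₁ 1 with hNdef
  set D : ℝ := ∑ i ∈ Finset.range N, (a i) ^ 2 with hDdef
  have hD0 : 0 ≤ D := Finset.sum_nonneg fun i _ => sq_nonneg _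
  have hai : ∀ i : ℕ, N ≤ i → a i ≤ δ * i := by
    intro i hi
    have hi1 : (1 : ℝ) ≤ (i : ℝ) := by exact_mod_cast le_trans (le_max_right N₁ 1) hi
    have h1 : a i < ((i : ℝ) + 1) / ((k : ℝ) + 1) := hN₁ i (le_trans (le_max_left _ _) hi)
    have h2 : ((i : ℝ) + 1) / ((k : ℝ) + 1) ≤ δ * i := by
      rw [div_le_iff₀ (by positivity : (0 : ℝ) < (k : ℝ) + 1)]
      rw [div_le_iff₀ (by positivity : (0 : ℝ) < (k : ℝ) + 1)] at hk1
      nlinarith [mul_le_mul_of_nonneg_right hk1 (by linarith : (0 : ℝ) ≤ (i : ℝ))]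
    linarith
  have key : ∀ n : ℕ, N ≤ n →
      ((n : ℝ) ^ 2)⁻¹ * ∑ i ∈ Finset.range n, (a i) ^ 2 ≤ D * ((n : ℝ) ^ 2)⁻¹ + ε / 2 := by
    intro n hn
    have hn1 : 1 ≤ n := le_trans (le_max_right _ _) hn
    have hnR : (0 : ℝ) < n := by exact_mod_cast hn1
    have hn2 : (0 : ℝ) < (n : ℝ) ^ 2 := by positivity
    have split : ∑ i ∈ Finset.range n, (a i) ^ 2
        = D + ∑ i ∈ Finset.Ico N n, (a i) ^ 2 := by
      rw [hDdef, Finset.sum_range_add_sum_Ico _ hn]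
    have bound1 : ∑ i ∈ Finset.Ico N n, (a i) ^ 2
        ≤ ∑ i ∈ Finset.Ico N n, (δ * n) * a i := by
      apply Finset.sum_le_sum
      intro i hi
      obtain ⟨hiN, hin⟩ := Finset.mem_Ico.mp hi
      have h1 : a i ≤ δ * i := hai i hiN
      have h2 : a i ≤ δ * n := le_trans h1 (by
        apply mul_le_mul_of_nonneg_left _ (le_of_lt hδ0)
        exact_mod_cast le_of_lt hin)
      calc (a i) ^ 2 = a i * a i := sq (a i) ▸ rfl
        _ ≤ (δ * n) * a i := mul_le_mul_of_nonneg_right h2 (ha0 i)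
    have bound2 : ∑ i ∈ Finset.Ico N n, (δ * n) * a i ≤ (δ * n) * (C' * n) := by
      rw [← Finset.mul_sum]
      apply mul_le_mul_of_nonneg_left _ (by positivity)
      calc ∑ i ∈ Finset.Ico N n, a i ≤ ∑ i ∈ Finset.range n, a i := by
            apply Finset.sum_le_sum_of_subset_of_nonneg
            · intro i hi
              exact Finset.mem_range.mpr (Finset.mem_Ico.mp hi).2
            · intro i _ _
              exact ha0 i
        _ ≤ C' * n := hC' n
    have heq : (δ * n) * (C' * n) = (ε / 2) * (n : ℝ) ^ 2 := by
      rw [hδdef]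
      field_simp
    calc ((n : ℝ) ^ 2)⁻¹ * ∑ i ∈ Finset.range n, (a i) ^ 2
        ≤ ((n : ℝ) ^ 2)⁻¹ * (D + (ε / 2) * (n : ℝ) ^ 2) := by
          apply mul_le_mul_of_nonneg_left _ (by positivity)
          rw [split, ← heq]
          linarith [le_trans bound1 bound2]
      _ = D * ((n : ℝ) ^ 2)⁻¹ + ε / 2 := by
          field_simp
  have htend : Filter.Tendsto (fun n : ℕ => D * ((n : ℝ) ^ 2)⁻¹ + ε / 2)
      Filter.atTop (𝓝 (ε / 2)) := by
    have h1 : Filter.Tendsto (fun n : ℕ => ((n : ℝ) ^ 2)⁻¹) Filter.atTop (𝓝 0) := by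
      have := tendsto_inv_atTop_nhds_zero_nat (𝕜 := ℝ)
      have h2 := this.pow 2
      simpa [inv_pow] using h2
    have h3 := (h1.const_mul D).add_const (ε / 2)
    simpa using h3
  have hev : ∀ᶠ n : ℕ in Filter.atTop, D * ((n : ℝ) ^ 2)⁻¹ + ε / 2 < ε := by
    apply htend.eventually_lt_const
    linarith
  filter_upwards [hev, Filter.eventually_ge_atTop N] with n h1 h2
  have h3 := key n h2
  have hnonneg : 0 ≤ ((n : ℝ) ^ 2)⁻¹ * ∑ i ∈ Finset.range n, (a i) ^ 2 := by
    apply mul_nonneg (by positivity)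
    exact Finset.sum_nonneg fun i _ => sq_nonneg _
  rw [Real.norm_eq_abs, abs_of_nonneg hnonneg]
  linarith

end Det
/-- Let `u ≥ 0` be a measurable function on an ergodic invertible
probability-preserving system `(X, μ, T)` such that `√u` is integrable. Then
`(1/n²) ∑_{i=0}^{n-1} u ∘ T^i → 0` almost everywhere. -/
theorem sqrt_integrable_implies_quadratic_averages_vanish
    {X : Type*} [MeasurableSpace X] (μ : Measure X) [IsProbabilityMeasure μ]
    (T : Equiv.Perm X) (hTmeas : Measurable (⇑T)) (hTmeas' : Measurable (⇑T.symm))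
    (hT : Ergodic (⇑T) μ)
    (u : X → ℝ) (hu : Measurable u) (hu0 : ∀ x, 0 ≤ u x)
    (hint : Integrable (fun x => Real.sqrt (u x)) μ) :
    ∀ᵐ x ∂μ,
      Tendsto (fun n : ℕ => ((n : ℝ) ^ 2)⁻¹ * ∑ i ∈ Finset.range n, u ((T ^ i) x))
        atTop (𝓝 0) := by
  set v : X → ℝ := fun x => Real.sqrt (u x) with hvdef
  have hv : Measurable v := hu.sqrt
  have hv0 : ∀ x, 0 ≤ v x := fun x => Real.sqrt_nonneg _
  have hmp : MeasurePreserving (⇑T) μ μ := hT.toMeasurePreserving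
  have h1 := ae_linear_bound (μ := μ) hmp hv hint
  have h2 := ae_sublinear (μ := μ) hmp hv hint hv0
  filter_upwards [h1, h2] with x hx1 hx2
  obtain ⟨C, hC⟩ := hx1
  have heq : (fun n : ℕ => ((n : ℝ) ^ 2)⁻¹ * ∑ i ∈ Finset.range n, u ((T ^ i) x))
      = fun n : ℕ => ((n : ℝ) ^ 2)⁻¹ * ∑ i ∈ Finset.range n, (v ((⇑T)^[i] x)) ^ 2 := by
    funext n
    congr 1
    apply Finset.sum_congr rfl
    intro i _
    rw [Equiv.Perm.iterate_eq_pow T i]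
    exact (Real.sq_sqrt (hu0 _)).symm
  rw [heq]
  exact det_lemma (a := fun i => v ((⇑T)^[i] x)) (fun i => hv0 _)
    (fun n => by simpa [birkS] using hC n) hx2
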